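/- Let P and Q be finite posets on [d], and let Δ(P,−Q) be the convex hull of Ω(P,−Q). If the origin of ℝ^d belongs to the interior of Δ(P,−Q), then P and Q possess a common linear extension. -/

import Mathlib

/-- A poset ideal (down-set) of a partial order `P` on `Fin d`. -/
def IsIdeal {d : ℕ} (P : PartialOrder (Fin d)) (I : Set (Fin d)) : Prop :=
  ∀ ⦃i j : Fin d⦄, i ∈ I → P.le j i → j ∈ I

/-- The indicator vector `ρ(I) = Σ_{i ∈ I} e_i` of a subset of `[d]`. -/
noncomputable def rho {d : ℕ} (I : Set (Fin d)) : Fin d → ℝ := I.indicator 1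

/-- `σ` is a linear extension of `P`: if `p_{σ a} < p_{σ b}` in `P` then `a < b`. -/
def IsLinExt {d : ℕ} (P : PartialOrder (Fin d)) (σ : Equiv.Perm (Fin d)) : Prop :=
  ∀ a b : Fin d, P.lt (σ a) (σ b) → a < b

/-- `Ω(P, -Q)`. -/
noncomputable def Omega {d : ℕ} (P Q : PartialOrder (Fin d)) : Set (Fin d → ℝ) :=
  {v | ∃ I : Set (Fin d), IsIdeal P I ∧ I.Nonempty ∧ v = rho I} ∪
  {v | ∃ J : Set (Fin d), IsIdeal Q J ∧ J.Nonempty ∧ v = - rho J} ∪ {0}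

section Aux
variable {d : ℕ}

noncomputable def eP (p : Fin d × Fin d) : Fin d → ℝ := Pi.single p.2 1 - Pi.single p.1 1
noncomputable def eQ (p : Fin d × Fin d) : Fin d → ℝ := Pi.single p.1 1 - Pi.single p.2 1
noncomputable def vecP (S : Multiset (Fin d × Fin d)) : Fin d → ℝ := (S.map eP).sum
noncomputable def vecQ (S : Multiset (Fin d × Fin d)) : Fin d → ℝ := (S.map eQ).sum

/-- dot product against `v` as an additive hom in the first argument. -/
noncomputable def dotA (v : Fin d → ℝ) : (Fin d → ℝ) →+ ℝ where
  toFun u := ∑ i, u i * v i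
  map_zero' := by simp
  map_add' u w := by simp [add_mul, Finset.sum_add_distrib]

lemma dotA_apply (v u : Fin d → ℝ) : dotA v u = ∑ i, u i * v i := rfl

lemma dotA_single (v : Fin d → ℝ) (j : Fin d) : dotA v (Pi.single j 1) = v j := by
  simp [dotA_apply, Pi.single_apply, ite_mul]

lemma dotA_vecP (v : Fin d → ℝ) (S : Multiset (Fin d × Fin d)) :
    dotA v (vecP S) = (S.map (fun p => v p.2 - v p.1)).sum := by
  unfold vecP
  rw [AddMonoidHom.map_multiset_sum, Multiset.map_map]
  congr 1
  apply Multiset.map_congr rfl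
  intro p _
  simp [eP, map_sub, dotA_single]

lemma dotA_vecQ (v : Fin d → ℝ) (S : Multiset (Fin d × Fin d)) :
    dotA v (vecQ S) = (S.map (fun p => v p.1 - v p.2)).sum := by
  unfold vecQ
  rw [AddMonoidHom.map_multiset_sum, Multiset.map_map]
  congr 1
  apply Multiset.map_congr rfl
  intro p _
  simp [eQ, map_sub, dotA_single]

lemma vecP_cons (p : Fin d × Fin d) (S : Multiset (Fin d × Fin d)) :
    vecP (p ::ₘ S) = eP p + vecP S := by simp [vecP]

lemma vecQ_cons (p : Fin d × Fin d) (S : Multiset (Fin d × Fin d)) :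
    vecQ (p ::ₘ S) = eQ p + vecQ S := by simp [vecQ]

lemma vecP_add (S T : Multiset (Fin d × Fin d)) : vecP (S + T) = vecP S + vecP T := by
  simp [vecP]

lemma vecQ_add (S T : Multiset (Fin d × Fin d)) : vecQ (S + T) = vecQ S + vecQ T := by
  simp [vecQ]

lemma vecQ_eq_neg_vecP (S : Multiset (Fin d × Fin d)) : vecQ S = -vecP S := by
  rw [vecP, vecQ, ← Multiset.sum_map_neg']
  rw [Multiset.map_map]
  congr 1
  apply Multiset.map_congr rfl
  intro p _
  simp [eP, eQ]

lemma msum_nonpos {S : Multiset ℝ} (h : ∀ x ∈ S, x ≤ 0) : S.sum ≤ 0 := by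
  have h1 := Multiset.sum_nonneg (s := S.map Neg.neg) (by
    intro x hx
    obtain ⟨y, hy, rfl⟩ := Multiset.mem_map.mp hx
    simpa using h y hy)
  rw [Multiset.sum_map_neg'] at h1
  linarith

lemma rho_nonneg (I : Set (Fin d)) (i : Fin d) : 0 ≤ rho I i := by
  unfold rho
  by_cases hi : i ∈ I
  · rw [Set.indicator_of_mem hi]; norm_num
  · rw [Set.indicator_of_notMem hi]

lemma rho_mono {P : PartialOrder (Fin d)} {I : Set (Fin d)} (hI : IsIdeal P I)
    {x y : Fin d} (hxy : P.le x y) : rho I y ≤ rho I x := by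
  by_cases hy : y ∈ I
  · have hx : x ∈ I := hI hy hxy
    unfold rho
    rw [Set.indicator_of_mem hy, Set.indicator_of_mem hx]
    simp
  · have : rho I y = 0 := Set.indicator_of_notMem hy _
    rw [this]; exact rho_nonneg I x

lemma chain_multisets {P Q : PartialOrder (Fin d)} {a b : Fin d}
    (h : Relation.ReflTransGen (fun x y => P.le x y ∨ Q.le x y) a b) :
    ∃ SP SQ : Multiset (Fin d × Fin d), (∀ p ∈ SP, P.lt p.1 p.2) ∧ (∀ p ∈ SQ, Q.lt p.1 p.2) ∧
      vecP SP - vecQ SQ = (Pi.single b 1 - Pi.single a 1 : Fin d → ℝ) := by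
  induction h with
  | refl => exact ⟨0, 0, by simp, by simp, by simp [vecP, vecQ]⟩
  | @tail b c hab hbc ih =>
    obtain ⟨SP, SQ, h1, h2, h3⟩ := ih
    by_cases hbc' : b = c
    · subst hbc'; exact ⟨SP, SQ, h1, h2, h3⟩
    rcases hbc with hle | hle
    · have hlt : P.lt b c := by
        rw [P.lt_iff_le_not_ge]
        refine ⟨hle, fun hcb => hbc' (P.le_antisymm _ _ hle hcb)⟩
      refine ⟨(b, c) ::ₘ SP, SQ, ?_, h2, ?_⟩
      · intro p hp
        rcases Multiset.mem_cons.mp hp with rfl | hp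
        · exact hlt
        · exact h1 p hp
      · rw [vecP_cons]
        have heq : eP (b, c) = (Pi.single c 1 - Pi.single b 1 : Fin d → ℝ) := rfl
        rw [heq, sub_eq_iff_eq_add] at *
        rw [h3]; abel
    · have hlt : Q.lt b c := by
        rw [Q.lt_iff_le_not_ge]
        refine ⟨hle, fun hcb => hbc' (Q.le_antisymm _ _ hle hcb)⟩
      refine ⟨SP, (b, c) ::ₘ SQ, h1, ?_, ?_⟩
      · intro p hp
        rcases Multiset.mem_cons.mp hp with rfl | hp
        · exact hlt
        · exact h2 p hp
      · rw [vecQ_cons]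
        have heq : eQ (b, c) = (Pi.single b 1 - Pi.single c 1 : Fin d → ℝ) := rfl
        rw [heq, sub_eq_iff_eq_add] at *
        rw [h3]; abel

lemma vecP_eval (S : Multiset (Fin d × Fin d)) (m : Fin d) :
    vecP S m = (S.map (fun p => eP p m)).sum := by
  have : vecP S m = Pi.evalAddMonoidHom (fun _ : Fin d => ℝ) m (vecP S) := rfl
  rw [this, vecP, AddMonoidHom.map_multiset_sum, Multiset.map_map]
  rfl

lemma vecP_ne_zero {R : PartialOrder (Fin d)} {S : Multiset (Fin d × Fin d)}
    (hS : S ≠ 0) (hmem : ∀ p ∈ S, R.lt p.1 p.2) : vecP S ≠ 0 := by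
  classical
  -- pick a maximal (wrt R) head
  obtain ⟨p0, hp0⟩ := Multiset.exists_mem_of_ne_zero hS
  set Hset : Set (Fin d) := {y | ∃ p ∈ S, p.2 = y} with hHset
  have hne : Hset.Nonempty := ⟨p0.2, p0, hp0, rfl⟩
  obtain ⟨m, hmH, hmax⟩ :=
    @Set.Finite.exists_maximalFor (Fin d) (Fin d) R.toLE ⟨fun a b c => R.le_trans a b c⟩ id Hset
      (Set.toFinite _) hne
  obtain ⟨pm, hpmS, hpm2⟩ := hmH
  -- no pair has first coordinate m
  have hno : ∀ p ∈ S, p.1 ≠ m := by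
    intro p hp hp1
    have hpH : p.2 ∈ Hset := ⟨p, hp, rfl⟩
    have hltp := hmem p hp
    have hlep : R.le p.1 p.2 := (R.lt_iff_le_not_ge _ _).mp hltp |>.1
    have hle : R.le m p.2 := hp1 ▸ hlep
    have heq : m = p.2 := R.le_antisymm _ _ hle (hmax hpH hle)
    have : R.lt p.1 p.1 := by rw [hp1, heq] at hltp ⊢; exact hltp
    exact ((R.lt_iff_le_not_ge _ _).mp this).2 ((R.lt_iff_le_not_ge _ _).mp this).1
  -- value at m is positive
  obtain ⟨T, hT⟩ := Multiset.exists_cons_of_mem hpmS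
  have hval : vecP S m = eP pm m + (T.map (fun p => eP p m)).sum := by
    rw [vecP_eval, hT, Multiset.map_cons, Multiset.sum_cons]
  have heP : ∀ p ∈ S, eP p m = (if m = p.2 then (1:ℝ) else 0) := by
    intro p hp
    have : eP p m = (if m = p.2 then (1:ℝ) else 0) - (if m = p.1 then (1:ℝ) else 0) := by
      simp [eP, Pi.single_apply]
    rw [this, if_neg (fun hh : m = p.1 => hno p hp hh.symm)]
    ring
  have h1 : eP pm m = 1 := by
    rw [heP pm hpmS, if_pos hpm2.symm]
  have h2 : (0:ℝ) ≤ (T.map (fun p => eP p m)).sum := by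
    apply Multiset.sum_nonneg
    intro x hx
    obtain ⟨p, hpT, rfl⟩ := Multiset.mem_map.mp hx
    have hpS : p ∈ S := by rw [hT]; exact Multiset.mem_cons_of_mem hpT
    rw [heP p hpS]
    split <;> norm_num
  intro hcontra
  have : vecP S m = 0 := by rw [hcontra]; rfl
  rw [hval, h1] at this
  linarith

end Aux

theorem common_linExt_of_zero_mem_interior {d : ℕ} (P Q : PartialOrder (Fin d))
    (h : (0 : Fin d → ℝ) ∈ interior (convexHull ℝ (Omega P Q))) :
    ∃ σ : Equiv.Perm (Fin d), IsLinExt P σ ∧ IsLinExt Q σ := by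
  classical
  set r : Fin d → Fin d → Prop := fun x y => P.le x y ∨ Q.le x y with hr
  by_cases hA : ∀ a b : Fin d, Relation.ReflTransGen r a b → Relation.ReflTransGen r b a → a = b
  · -- the combined relation is a partial order: extend it to a linear order
    haveI : IsPartialOrder (Fin d) (Relation.ReflTransGen r) :=
      { refl := fun a => Relation.ReflTransGen.refl
        trans := fun a b c h1 h2 => h1.trans h2
        antisymm := hA }
    obtain ⟨s, hs, hrs⟩ := extend_partialOrder (Relation.ReflTransGen r)
    haveI := hs.toIsPartialOrder
    haveI : IsTotal (Fin d) s := hs.toTotal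
    haveI : DecidableRel s := Classical.decRel s
    set l : List (Fin d) := Finset.sort Finset.univ s with hl
    have hlen : l.length = d := by
      rw [hl, Finset.length_sort, Finset.card_univ, Fintype.card_fin]
    have hnd : l.Nodup := Finset.sort_nodup Finset.univ s
    have hsorted : List.Pairwise s l := Finset.pairwise_sort Finset.univ s
    set g : Fin d → Fin d := fun a => l.get (Fin.cast hlen.symm a) with hg
    have hginj : Function.Injective g := by
      intro a b hab
      have h2 := (List.nodup_iff_injective_get.mp hnd) hab
      have h3 : (a : ℕ) = b := by
        have := congrArg Fin.val h2
        simpa using this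
      exact Fin.ext h3
    have hgbij : Function.Bijective g := Finite.injective_iff_bijective.mp hginj
    set σ : Equiv.Perm (Fin d) := Equiv.ofBijective g hgbij with hσ
    have key : ∀ a b : Fin d, s (σ a) (σ b) → ¬ (σ a = σ b) → a < b := by
      intro a b hsab hne
      rcases lt_trichotomy a b with hlt | heq | hgt
      · exact hlt
      · exact absurd (by rw [heq]) hne
      · have hba : s (σ b) (σ a) := by
          apply hsorted.rel_get_of_lt
          have hval : (b : ℕ) < (a : ℕ) := hgt
          rw [Fin.lt_def]
          simpa using hval
        exact absurd (_root_.antisymm hsab hba) hne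
    refine ⟨σ, ?_, ?_⟩
    · intro a b hlt
      have hle := (P.lt_iff_le_not_ge _ _).mp hlt
      have hne : ¬ (σ a = σ b) := by
        intro hEq
        rw [hEq] at hle
        exact hle.2 hle.1
      exact key a b (hrs _ _ (Relation.ReflTransGen.single (Or.inl hle.1))) hne
    · intro a b hlt
      have hle := (Q.lt_iff_le_not_ge _ _).mp hlt
      have hne : ¬ (σ a = σ b) := by
        intro hEq
        rw [hEq] at hle
        exact hle.2 hle.1
      exact key a b (hrs _ _ (Relation.ReflTransGen.single (Or.inr hle.1))) hne
  · -- a cycle exists; derive a contradiction with the interior hypothesis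
    exfalso
    push_neg at hA
    obtain ⟨a, b, hab1, hab2, hne⟩ := hA
    obtain ⟨SP1, SQ1, hP1, hQ1, hT1⟩ := chain_multisets (P := P) (Q := Q) hab1
    obtain ⟨SP2, SQ2, hP2, hQ2, hT2⟩ := chain_multisets (P := P) (Q := Q) hab2
    set SP := SP1 + SP2 with hSP
    set SQ := SQ1 + SQ2 with hSQ
    have hPmem : ∀ p ∈ SP, P.lt p.1 p.2 := by
      intro p hp; rcases Multiset.mem_add.mp hp with h' | h'
      exacts [hP1 p h', hP2 p h']
    have hQmem : ∀ p ∈ SQ, Q.lt p.1 p.2 := by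
      intro p hp; rcases Multiset.mem_add.mp hp with h' | h'
      exacts [hQ1 p h', hQ2 p h']
    have hGH : vecP SP = vecQ SQ := by
      have hz : vecP SP - vecQ SQ = 0 := by
        rw [hSP, hSQ, vecP_add, vecQ_add]
        have hre : vecP SP1 + vecP SP2 - (vecQ SQ1 + vecQ SQ2)
            = (vecP SP1 - vecQ SQ1) + (vecP SP2 - vecQ SQ2) := by abel
        rw [hre, hT1, hT2]; abel
      rw [sub_eq_zero] at hz; exact hz
    -- SP must be nonzero
    have hSPne : SP ≠ 0 := by
      intro hSPz
      have hvq : vecQ SQ = 0 := by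
        rw [← hGH, hSPz]; simp [vecP]
      by_cases hSQz : SQ = 0
      · -- all steps trivial : a = b
        have hSP1 : SP1 = 0 := by
          have : SP1 ≤ 0 := hSPz ▸ (Multiset.le_add_right _ _)
          exact Multiset.le_zero.mp this
        have hSQ1 : SQ1 = 0 := by
          have : SQ1 ≤ 0 := hSQz ▸ (Multiset.le_add_right _ _)
          exact Multiset.le_zero.mp this
        rw [hSP1, hSQ1] at hT1
        have hz : (0 : Fin d → ℝ) = Pi.single b 1 - Pi.single a 1 := by
          rw [← hT1]; simp [vecP, vecQ]
        have := congrFun hz b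
        simp [Pi.single_apply] at this
        by_cases hba : b = a
        · exact hne hba.symm
        · rw [if_neg hba] at this; norm_num at this
      · exact vecP_ne_zero (R := Q) hSQz hQmem (by
          rw [vecQ_eq_neg_vecP] at hvq
          exact neg_eq_zero.mp hvq)
    set f : Fin d → ℝ := vecP SP with hf
    have hne0 : f ≠ 0 := vecP_ne_zero (R := P) hSPne hPmem
    set φ : (Fin d → ℝ) → ℝ := fun x => ∑ i, f i * x i with hφ
    have hφlin : IsLinearMap ℝ φ := by
      constructor
      · intro u v; simp [hφ, mul_add, Finset.sum_add_distrib]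
      · intro c u
        simp only [hφ, smul_eq_mul, Pi.smul_apply, Finset.mul_sum]
        apply Finset.sum_congr rfl
        intro i _; ring
    have hφdot : ∀ x, φ x = dotA x f := fun x => rfl
    have hOm : Omega P Q ⊆ {x | φ x ≤ 0} := by
      rintro v ((⟨I, hI, -, rfl⟩ | ⟨J, hJ, -, rfl⟩) | rfl)
      · show φ (rho I) ≤ 0
        rw [hφdot, hf, dotA_vecP]
        apply msum_nonpos
        intro x hx
        obtain ⟨p, hpS, rfl⟩ := Multiset.mem_map.mp hx
        have hlep : P.le p.1 p.2 := ((P.lt_iff_le_not_ge _ _).mp (hPmem p hpS)).1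
        have := rho_mono hI hlep
        linarith
      · show φ (-rho J) ≤ 0
        have hneg : φ (-rho J) = -φ (rho J) := by
          simp [hφ, Finset.sum_neg_distrib]
        rw [hneg]
        have hQside : 0 ≤ φ (rho J) := by
          rw [hφdot, hGH, dotA_vecQ]
          apply Multiset.sum_nonneg
          intro x hx
          obtain ⟨p, hpS, rfl⟩ := Multiset.mem_map.mp hx
          have hlep : Q.le p.1 p.2 := ((Q.lt_iff_le_not_ge _ _).mp (hQmem p hpS)).1
          have := rho_mono hJ hlep
          linarith
        linarith
      · show φ 0 ≤ 0
        simp [hφ]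
    have hconv : Convex ℝ {x | φ x ≤ 0} := convex_halfSpace_le hφlin 0
    have hsub : convexHull ℝ (Omega P Q) ⊆ {x | φ x ≤ 0} := convexHull_min hOm hconv
    have h0 : {x | φ x ≤ 0} ∈ nhds (0 : Fin d → ℝ) :=
      mem_interior_iff_mem_nhds.mp (interior_mono hsub h)
    have hφfpos : 0 < φ f := by
      rw [hφ]
      apply Finset.sum_pos' (fun i _ => mul_self_nonneg (f i))
      obtain ⟨i, hi⟩ : ∃ i, f i ≠ 0 := by
        by_contra hc; push_neg at hc; exact hne0 (funext hc)
      exact ⟨i, Finset.mem_univ i, mul_self_pos.mpr hi⟩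
    have hT : Filter.Tendsto (fun t : ℝ => t • f) (nhds 0) (nhds (0 : Fin d → ℝ)) := by
      have hc : Continuous fun t : ℝ => t • f := continuous_id.smul continuous_const
      have := hc.tendsto 0
      simpa using this
    have hev : ∀ᶠ t : ℝ in nhds 0, φ (t • f) ≤ 0 :=
      hT.eventually (Filter.eventually_of_mem h0 (fun x hx => hx))
    have hev2 : ∀ᶠ t : ℝ in nhdsWithin 0 (Set.Ioi 0), φ (t • f) ≤ 0 :=
      hev.filter_mono nhdsWithin_le_nhds
    have hev3 : ∀ᶠ t : ℝ in nhdsWithin 0 (Set.Ioi 0), t ∈ Set.Ioi (0:ℝ) :=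
      Filter.eventually_of_mem self_mem_nhdsWithin (fun x hx => hx)
    obtain ⟨t, ht1, ht2⟩ := (hev2.and hev3).exists
    have hsc : φ (t • f) = t * φ f := by
      rw [hφ, Finset.mul_sum]
      apply Finset.sum_congr rfl
      intro i _
      simp [smul_eq_mul]; ring
    rw [hsc] at ht1
    have : 0 < t * φ f := mul_pos ht2 hφfpos
    linarith
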